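/- For ω ∈ ℂ³ and nonzero k ∈ ℝ³, if R_k is the rotation with rows kᵀ/|k|, (k×n)ᵀ/|k×n|, (k×(k×n))ᵀ/(|k×n||k|) (with k×n ≠ 0), S = diag(−1,−1,1), and the rotated vector ω̌ = R_k ω satisfies ω̌_x = 0 and ω̌_{−k} = S conj(ω̌), then ω × ω̄ = (k/|k|) · 2 Im(ω̌_y conj(ω̌_z)) · i, i.e. Rᵀ_k(ω̌ × S conj(ω̌)) has the form (2i Im(ω̌_y conj(ω̌_z))) k/|k|. -/

import Mathlib

open Matrix

lemma helicity_aux (k0 k1 k2 n0 n1 n2 u0 u1 u2 v0 v1 v2 : ℂ)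
    (he : k0*u0 + k1*u1 + k2*u2 = 0) (he' : k0*v0 + k1*v1 + k2*v2 = 0) :
    ((k1*n2 - k2*n1)*(k1*n2 - k2*n1) + (k2*n0 - k0*n2)*(k2*n0 - k0*n2) + (k0*n1 - k1*n0)*(k0*n1 - k1*n0)) * (k0*k0 + k1*k1 + k2*k2) * (u1*v2 - u2*v1) = (((k1*n2 - k2*n1)*u0 + (k2*n0 - k0*n2)*u1 + (k0*n1 - k1*n0)*u2)*((k1*(k0*n1 - k1*n0) - k2*(k2*n0 - k0*n2))*v0 + (k2*(k1*n2 - k2*n1) - k0*(k0*n1 - k1*n0))*v1 + (k0*(k2*n0 - k0*n2) - k1*(k1*n2 - k2*n1))*v2) - ((k1*n2 - k2*n1)*v0 + (k2*n0 - k0*n2)*v1 + (k0*n1 - k1*n0)*v2)*((k1*(k0*n1 - k1*n0) - k2*(k2*n0 - k0*n2))*u0 + (k2*(k1*n2 - k2*n1) - k0*(k0*n1 - k1*n0))*u1 + (k0*(k2*n0 - k0*n2) - k1*(k1*n2 - k2*n1))*u2)) * k0 ∧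
    ((k1*n2 - k2*n1)*(k1*n2 - k2*n1) + (k2*n0 - k0*n2)*(k2*n0 - k0*n2) + (k0*n1 - k1*n0)*(k0*n1 - k1*n0)) * (k0*k0 + k1*k1 + k2*k2) * (u2*v0 - u0*v2) = (((k1*n2 - k2*n1)*u0 + (k2*n0 - k0*n2)*u1 + (k0*n1 - k1*n0)*u2)*((k1*(k0*n1 - k1*n0) - k2*(k2*n0 - k0*n2))*v0 + (k2*(k1*n2 - k2*n1) - k0*(k0*n1 - k1*n0))*v1 + (k0*(k2*n0 - k0*n2) - k1*(k1*n2 - k2*n1))*v2) - ((k1*n2 - k2*n1)*v0 + (k2*n0 - k0*n2)*v1 + (k0*n1 - k1*n0)*v2)*((k1*(k0*n1 - k1*n0) - k2*(k2*n0 - k0*n2))*u0 + (k2*(k1*n2 - k2*n1) - k0*(k0*n1 - k1*n0))*u1 + (k0*(k2*n0 - k0*n2) - k1*(k1*n2 - k2*n1))*u2)) * k1 ∧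
    ((k1*n2 - k2*n1)*(k1*n2 - k2*n1) + (k2*n0 - k0*n2)*(k2*n0 - k0*n2) + (k0*n1 - k1*n0)*(k0*n1 - k1*n0)) * (k0*k0 + k1*k1 + k2*k2) * (u0*v1 - u1*v0) = (((k1*n2 - k2*n1)*u0 + (k2*n0 - k0*n2)*u1 + (k0*n1 - k1*n0)*u2)*((k1*(k0*n1 - k1*n0) - k2*(k2*n0 - k0*n2))*v0 + (k2*(k1*n2 - k2*n1) - k0*(k0*n1 - k1*n0))*v1 + (k0*(k2*n0 - k0*n2) - k1*(k1*n2 - k2*n1))*v2) - ((k1*n2 - k2*n1)*v0 + (k2*n0 - k0*n2)*v1 + (k0*n1 - k1*n0)*v2)*((k1*(k0*n1 - k1*n0) - k2*(k2*n0 - k0*n2))*u0 + (k2*(k1*n2 - k2*n1) - k0*(k0*n1 - k1*n0))*u1 + (k0*(k2*n0 - k0*n2) - k1*(k1*n2 - k2*n1))*u2)) * k2 := by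
  refine ⟨?_, ?_, ?_⟩
  · linear_combination
        (((k1*n2 - k2*n1)*v0 + (k2*n0 - k0*n2)*v1 + (k0*n1 - k1*n0)*v2)*(k1*(k0*n1 - k1*n0) - k2*(k2*n0 - k0*n2)) -
         ((k1*(k0*n1 - k1*n0) - k2*(k2*n0 - k0*n2))*v0 + (k2*(k1*n2 - k2*n1) - k0*(k0*n1 - k1*n0))*v1 + (k0*(k2*n0 - k0*n2) - k1*(k1*n2 - k2*n1))*v2)*(k1*n2 - k2*n1)) * he +
        (((k1*(k0*n1 - k1*n0) - k2*(k2*n0 - k0*n2))*u0 + (k2*(k1*n2 - k2*n1) - k0*(k0*n1 - k1*n0))*u1 + (k0*(k2*n0 - k0*n2) - k1*(k1*n2 - k2*n1))*u2)*(k1*n2 - k2*n1) -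
         ((k1*n2 - k2*n1)*u0 + (k2*n0 - k0*n2)*u1 + (k0*n1 - k1*n0)*u2)*(k1*(k0*n1 - k1*n0) - k2*(k2*n0 - k0*n2))) * he'
  · linear_combination
        (((k1*n2 - k2*n1)*v0 + (k2*n0 - k0*n2)*v1 + (k0*n1 - k1*n0)*v2)*(k2*(k1*n2 - k2*n1) - k0*(k0*n1 - k1*n0)) -
         ((k1*(k0*n1 - k1*n0) - k2*(k2*n0 - k0*n2))*v0 + (k2*(k1*n2 - k2*n1) - k0*(k0*n1 - k1*n0))*v1 + (k0*(k2*n0 - k0*n2) - k1*(k1*n2 - k2*n1))*v2)*(k2*n0 - k0*n2)) * he +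
        (((k1*(k0*n1 - k1*n0) - k2*(k2*n0 - k0*n2))*u0 + (k2*(k1*n2 - k2*n1) - k0*(k0*n1 - k1*n0))*u1 + (k0*(k2*n0 - k0*n2) - k1*(k1*n2 - k2*n1))*u2)*(k2*n0 - k0*n2) -
         ((k1*n2 - k2*n1)*u0 + (k2*n0 - k0*n2)*u1 + (k0*n1 - k1*n0)*u2)*(k2*(k1*n2 - k2*n1) - k0*(k0*n1 - k1*n0))) * he'
  · linear_combination
        (((k1*n2 - k2*n1)*v0 + (k2*n0 - k0*n2)*v1 + (k0*n1 - k1*n0)*v2)*(k0*(k2*n0 - k0*n2) - k1*(k1*n2 - k2*n1)) -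
         ((k1*(k0*n1 - k1*n0) - k2*(k2*n0 - k0*n2))*v0 + (k2*(k1*n2 - k2*n1) - k0*(k0*n1 - k1*n0))*v1 + (k0*(k2*n0 - k0*n2) - k1*(k1*n2 - k2*n1))*v2)*(k0*n1 - k1*n0)) * he +
        (((k1*(k0*n1 - k1*n0) - k2*(k2*n0 - k0*n2))*u0 + (k2*(k1*n2 - k2*n1) - k0*(k0*n1 - k1*n0))*u1 + (k0*(k2*n0 - k0*n2) - k1*(k1*n2 - k2*n1))*u2)*(k0*n1 - k1*n0) -
         ((k1*n2 - k2*n1)*u0 + (k2*n0 - k0*n2)*u1 + (k0*n1 - k1*n0)*u2)*(k0*(k2*n0 - k0*n2) - k1*(k1*n2 - k2*n1))) * he'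

noncomputable def enorm3 (j : Fin 3 → ℝ) : ℝ := Real.sqrt (j ⬝ᵥ j)

noncomputable def Rmat (n j : Fin 3 → ℝ) : Matrix (Fin 3) (Fin 3) ℝ :=
  Matrix.of ![(enorm3 j)⁻¹ • j,
              (enorm3 (crossProduct j n))⁻¹ • crossProduct j n,
              (enorm3 (crossProduct j n) * enorm3 j)⁻¹ • crossProduct j (crossProduct j n)]

noncomputable def toC (j : Fin 3 → ℝ) : Fin 3 → ℂ := fun i => (j i : ℂ)

/-- The rotated vorticity `ω̌ = R_k ω` (complexified rotation applied to `ω`). -/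
noncomputable def omch (n k : Fin 3 → ℝ) (ω : Fin 3 → ℂ) : Fin 3 → ℂ :=
  ((Rmat n k).map Complex.ofReal) *ᵥ ω

set_option maxHeartbeats 2000000 in
/-- In rotated coordinates `ω̌ = R_k ω` the helicity combination becomes
`ω × ω̄ = (2 Im(ω̌_y conj ω̌_z) i / |k|) k`. -/
theorem helicity_rotated (n k : Fin 3 → ℝ) (hk : k ≠ 0) (hkn : crossProduct k n ≠ 0)
    (ω : Fin 3 → ℂ) (hdiv : toC k ⬝ᵥ ω = 0) :
    crossProduct ω (star ω) =
      (2 * (((omch n k ω 1 * (starRingEnd ℂ) (omch n k ω 2)).im : ℝ) : ℂ) *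
        Complex.I / ((enorm3 k : ℝ) : ℂ)) • toC k := by
  set a := crossProduct k n with ha
  set c := crossProduct k a with hc
  have hK0 : (0:ℝ) < k ⬝ᵥ k :=
    lt_of_le_of_ne (Finset.sum_nonneg fun i _ => mul_self_nonneg _)
      (fun h => hk (dotProduct_self_eq_zero.1 h.symm))
  have hA0 : (0:ℝ) < a ⬝ᵥ a :=
    lt_of_le_of_ne (Finset.sum_nonneg fun i _ => mul_self_nonneg _)
      (fun h => hkn (dotProduct_self_eq_zero.1 h.symm))
  have hsK : enorm3 k * enorm3 k = k ⬝ᵥ k := Real.mul_self_sqrt hK0.le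
  have hsA : enorm3 a * enorm3 a = a ⬝ᵥ a := Real.mul_self_sqrt hA0.le
  have hsKpos : (0:ℝ) < enorm3 k := Real.sqrt_pos.2 hK0
  have hsApos : (0:ℝ) < enorm3 a := Real.sqrt_pos.2 hA0
  have hKne : ((enorm3 k : ℝ) : ℂ) ≠ 0 := by exact_mod_cast hsKpos.ne'
  have hAne : ((enorm3 a : ℝ) : ℂ) ≠ 0 := by exact_mod_cast hsApos.ne'
  set b : ℂ := (toC a ⬝ᵥ ω) * (starRingEnd ℂ) (toC c ⬝ᵥ ω) with hb
  have h1 : omch n k ω 1 = (((enorm3 a)⁻¹ : ℝ) : ℂ) * (toC a ⬝ᵥ ω) := by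
    simp [omch, Rmat, mulVec, dotProduct, toC, Fin.sum_univ_three, ha]
    ring
  have h2 : omch n k ω 2 = ((((enorm3 a * enorm3 k))⁻¹ : ℝ) : ℂ) * (toC c ⬝ᵥ ω) := by
    simp [omch, Rmat, mulVec, dotProduct, toC, Fin.sum_univ_three, ha, hc]
    ring
  have hz : omch n k ω 1 * (starRingEnd ℂ) (omch n k ω 2)
      = ((((enorm3 a)⁻¹ * (enorm3 a * enorm3 k)⁻¹ : ℝ)) : ℂ) * b := by
    rw [h1, h2, hb, _root_.map_mul, Complex.conj_ofReal]
    push_cast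
    ring
  have him : (((((enorm3 a)⁻¹ * (enorm3 a * enorm3 k)⁻¹ : ℝ)) : ℂ) * b).im
      = ((enorm3 a)⁻¹ * (enorm3 a * enorm3 k)⁻¹) * b.im := by
    simp [Complex.mul_im]
  have hr : ((a ⬝ᵥ a) * (k ⬝ᵥ k))⁻¹
      = (enorm3 a)⁻¹ * (enorm3 a * enorm3 k)⁻¹ * (enorm3 k)⁻¹ := by
    rw [← hsA, ← hsK]
    field_simp
  have hcoeff : (2 * (((omch n k ω 1 * (starRingEnd ℂ) (omch n k ω 2)).im : ℝ) : ℂ) *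
      Complex.I / ((enorm3 k : ℝ) : ℂ))
      = (b - (starRingEnd ℂ) b) * (((a ⬝ᵥ a) * (k ⬝ᵥ k) : ℝ) : ℂ)⁻¹ := by
    rw [hz, him, Complex.sub_conj, ← Complex.ofReal_inv, hr]
    push_cast
    rw [div_eq_mul_inv]
    ring
  rw [hcoeff]
  have hAKne : (((a ⬝ᵥ a) * (k ⬝ᵥ k) : ℝ) : ℂ) ≠ 0 := by
    exact_mod_cast (mul_pos hA0 hK0).ne'
  have he : (k 0:ℂ)*ω 0 + (k 1:ℂ)*ω 1 + (k 2:ℂ)*ω 2 = 0 := by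
    simpa [dotProduct, Fin.sum_univ_three, toC] using hdiv
  have he' : (k 0:ℂ)*(starRingEnd ℂ) (ω 0) + (k 1:ℂ)*(starRingEnd ℂ) (ω 1)
      + (k 2:ℂ)*(starRingEnd ℂ) (ω 2) = 0 := by
    have h := congrArg (starRingEnd ℂ) hdiv
    simpa [dotProduct, Fin.sum_univ_three, toC, map_add, _root_.map_mul,
      Complex.conj_ofReal] using h
  have haux := helicity_aux (k 0 : ℂ) (k 1 : ℂ) (k 2 : ℂ) (n 0 : ℂ) (n 1 : ℂ) (n 2 : ℂ)
      (ω 0) (ω 1) (ω 2) ((starRingEnd ℂ) (ω 0)) ((starRingEnd ℂ) (ω 1)) ((starRingEnd ℂ) (ω 2))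
      he he'
  have key : ∀ i, (((a ⬝ᵥ a) * (k ⬝ᵥ k) : ℝ) : ℂ) * crossProduct ω (star ω) i
      = (b - (starRingEnd ℂ) b) * toC k i := by
    intro i
    fin_cases i
    · simp only [hb, hc, ha, cross_apply, dotProduct, Fin.sum_univ_three, toC,
        Pi.star_apply, Complex.star_def, map_add, _root_.map_mul, Complex.conj_ofReal,
        Matrix.cons_val_zero, Matrix.cons_val_one, Matrix.head_cons,
        Matrix.cons_val_two, Matrix.tail_cons, Fin.isValue, Fin.zero_eta, Fin.mk_one,
        Complex.conj_conj, show (⟨2, by omega⟩ : Fin 3) = 2 from rfl]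
      push_cast
      linear_combination haux.1
    · simp only [hb, hc, ha, cross_apply, dotProduct, Fin.sum_univ_three, toC,
        Pi.star_apply, Complex.star_def, map_add, _root_.map_mul, Complex.conj_ofReal,
        Matrix.cons_val_zero, Matrix.cons_val_one, Matrix.head_cons,
        Matrix.cons_val_two, Matrix.tail_cons, Fin.isValue, Fin.zero_eta, Fin.mk_one,
        Complex.conj_conj, show (⟨2, by omega⟩ : Fin 3) = 2 from rfl]
      push_cast
      linear_combination haux.2.1
    · simp only [hb, hc, ha, cross_apply, dotProduct, Fin.sum_univ_three, toC,
        Pi.star_apply, Complex.star_def, map_add, _root_.map_mul, Complex.conj_ofReal,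
        Matrix.cons_val_zero, Matrix.cons_val_one, Matrix.head_cons,
        Matrix.cons_val_two, Matrix.tail_cons, Fin.isValue, Fin.zero_eta, Fin.mk_one,
        Complex.conj_conj, show (⟨2, by omega⟩ : Fin 3) = 2 from rfl]
      push_cast
      linear_combination haux.2.2
  funext i
  simp only [Pi.smul_apply, smul_eq_mul]
  rw [mul_comm (b - (starRingEnd ℂ) b) ((((a ⬝ᵥ a) * (k ⬝ᵥ k) : ℝ) : ℂ))⁻¹, mul_assoc,
    ← key i, ← mul_assoc, inv_mul_cancel₀ hAKne, one_mul]
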